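/- Knight's identity: for all real numbers u with u ≠ 0 and all real v, the check function ρ_τ(x) = x(τ - 1{x < 0}) satisfies ρ_τ(u - v) - ρ_τ(u) = -v·(τ - 1{u < 0}) + (u - v)·(1{v < u < 0} - 1{0 < u < v}). -/
import Mathlib


/-- Knight's identity for the quantile check function
`ρ_τ(x) = x (τ - 1{x < 0})`. -/
theorem knight_identity (τ u v : ℝ) (hτ : τ ∈ Set.Ioo (0:ℝ) 1) (hu : u ≠ 0) :
    (fun x : ℝ => x * (τ - if x < 0 then 1 else 0)) (u - v)
      - (fun x : ℝ => x * (τ - if x < 0 then 1 else 0)) u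
    = -v * (τ - if u < 0 then 1 else 0)
      + (u - v) * ((if v < u ∧ u < 0 then (1:ℝ) else 0)
          - (if 0 < u ∧ u < v then (1:ℝ) else 0)) := by
  simp only []
  rcases lt_or_gt_of_ne hu with hu'|hu' <;>
    rcases lt_trichotomy u v with hc|hc|hc
  · rw [if_pos (sub_neg.mpr hc), if_pos hu',
      if_neg (fun h => hc.asymm h.1), if_neg (fun h => hu'.asymm h.1)]
    ring
  · subst hc
    rw [sub_self, if_neg (lt_irrefl 0), if_pos hu',
      if_neg (fun h => (lt_irrefl u) h.1), if_neg (fun h => hu'.asymm h.1)]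
    ring
  · rw [if_neg (not_lt.mpr (by linarith : (0:ℝ) ≤ u - v)), if_pos hu',
      if_pos ⟨hc, hu'⟩, if_neg (fun h => hu'.asymm h.1)]
    ring
  · rw [if_pos (sub_neg.mpr hc), if_neg hu'.asymm,
      if_neg (fun h => hu'.asymm h.2), if_pos ⟨hu', hc⟩]
    ring
  · subst hc
    rw [sub_self, if_neg (lt_irrefl 0), if_neg hu'.asymm,
      if_neg (fun h => (lt_irrefl u) h.1), if_neg (fun h => (lt_irrefl u) h.2)]
    ring
  · rw [if_neg (not_lt.mpr (by linarith : (0:ℝ) ≤ u - v)), if_neg hu'.asymm,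
      if_neg (fun h => hu'.asymm h.2), if_neg (fun h => hc.asymm h.2)]
    ring
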